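/- Let G be a graph on {1,...,n} with a twin pair (1,2) and let r ∈ ℕ. If the polynomial x^T(A_{G\1}+I)x − 1/α(G) (in variables x_2,...,x_n) lies in M(x_2,...,x_n)_r + I(Σ_{i=2}^n x_i − 1)_r, then x^T(A_G+I)x − 1/α(G) lies in M(x_1,...,x_n)_r + I(Σ_{i=1}^n x_i − 1)_r. In particular, finite convergence of the Lasserre hierarchy for the Motzkin–Straus problem of G \ 1 implies finite convergence for that of G. -/
import Mathlib


open Finset Matrix MvPolynomial

/-- A polynomial is a sum of squares. -/
def IsSOS {n : ℕ} (p : MvPolynomial (Fin n) ℝ) : Prop :=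
  ∃ (k : ℕ) (f : Fin k → MvPolynomial (Fin n) ℝ), p = ∑ j, (f j) ^ 2

/-- The stability number: the maximum cardinality of a stable (independent) set. -/
noncomputable def alpha {V : Type*} [Fintype V] (G : SimpleGraph V) : ℕ :=
  sSup {k | ∃ S : Finset V, (∀ i ∈ S, ∀ j ∈ S, ¬ G.Adj i j) ∧ S.card = k}

/-- Substitution by polynomials of total degree at most one does not increase total degree. -/
lemma totalDegree_aeval_le_of_deg_le_one {n : ℕ} (g : Fin n → MvPolynomial (Fin n) ℝ)
    (hg : ∀ i, (g i).totalDegree ≤ 1) (p : MvPolynomial (Fin n) ℝ) :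
    (aeval g p).totalDegree ≤ p.totalDegree := by
  conv_lhs => rw [p.as_sum]
  rw [map_sum]
  refine (totalDegree_finset_sum _ _).trans (Finset.sup_le fun m hm => ?_)
  rw [aeval_monomial]
  refine (totalDegree_mul _ _).trans ?_
  have h1 : ((algebraMap ℝ (MvPolynomial (Fin n) ℝ)) (coeff m p)).totalDegree = 0 :=
    totalDegree_C _
  rw [h1, zero_add]
  refine le_trans ?_ (le_totalDegree hm)
  refine (totalDegree_finset_prod _ _).trans ?_
  rw [Finsupp.sum]
  refine Finset.sum_le_sum fun i _ => ?_
  exact (totalDegree_pow _ _).trans ((Nat.mul_le_mul_left _ (hg i)).trans (by simp))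

/-- Lower bound for the total degree of `X s * p`. -/
lemma le_totalDegree_X_mul {n : ℕ} (s : Fin n) {p : MvPolynomial (Fin n) ℝ} (hp : p ≠ 0) :
    p.totalDegree + 1 ≤ (X s * p).totalDegree := by
  obtain ⟨m, hm, hms⟩ := Finset.exists_mem_eq_sup p.support (support_nonempty.mpr hp)
    (fun m => m.sum fun _ e => e)
  have hmem : Finsupp.single s 1 + m ∈ (X s * p).support := by
    rw [support_X_mul]
    exact Finset.mem_map_of_mem _ hm
  have hle := le_totalDegree hmem
  rw [Finsupp.sum_add_index' (fun _ => rfl) (fun _ _ _ => rfl),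
    Finsupp.sum_single_index rfl] at hle
  rw [totalDegree, hms]
  omega

/-- Contracting a twin pair `(a,b)` (deleting vertex `a`) preserves degree-`r` Lasserre
certificates: if `xᵀ(A_{G∖a}+I)x - 1/α(G)` lies in `M(x_i : i ≠ a)_r + I(Σ_{i≠a} x_i - 1)_r`,
then `xᵀ(A_G+I)x - 1/α(G)` lies in `M(x_1,…,x_n)_r + I(Σ_i x_i - 1)_r`. -/
theorem twin_pair_lasserre_transfer {n : ℕ} (G : SimpleGraph (Fin n)) [DecidableRel G.Adj]
    (a b : Fin n) (hadj : G.Adj a b)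
    (htwin : G.neighborSet a \ {b} = G.neighborSet b \ {a}) (r : ℕ)
    (h : ∃ (σ₀ : MvPolynomial (Fin n) ℝ) (σ : Fin n → MvPolynomial (Fin n) ℝ)
        (q : MvPolynomial (Fin n) ℝ),
      IsSOS σ₀ ∧ σ₀.totalDegree ≤ r ∧
      (∀ i ∈ univ.erase a, IsSOS (σ i) ∧ (X i * σ i).totalDegree ≤ r) ∧
      (q * ((∑ i ∈ univ.erase a, X i) - 1)).totalDegree ≤ r ∧
      (∑ i ∈ univ.erase a, ∑ j ∈ univ.erase a,
          C ((G.adjMatrix ℝ + 1) i j) * X i * X j) - C (1 / (alpha G : ℝ)) =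
        σ₀ + (∑ i ∈ univ.erase a, X i * σ i) +
          q * ((∑ i ∈ univ.erase a, X i) - 1)) :
    ∃ (σ₀ : MvPolynomial (Fin n) ℝ) (σ : Fin n → MvPolynomial (Fin n) ℝ)
      (q : MvPolynomial (Fin n) ℝ),
      IsSOS σ₀ ∧ σ₀.totalDegree ≤ r ∧
      (∀ i, IsSOS (σ i) ∧ (X i * σ i).totalDegree ≤ r) ∧
      (q * ((∑ i, X i) - 1)).totalDegree ≤ r ∧
      (∑ i, ∑ j, C ((G.adjMatrix ℝ + 1) i j) * X i * X j) - C (1 / (alpha G : ℝ)) =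
        σ₀ + (∑ i, X i * σ i) + q * ((∑ i, X i) - 1) := by
  classical
  obtain ⟨σ₀, σ, q, hσ₀sos, hσ₀deg, hσ, hqdeg, heq⟩ := h
  have hab : a ≠ b := G.ne_of_adj hadj
  have hba : b ≠ a := hab.symm
  have hbmem : b ∈ univ.erase a := Finset.mem_erase.mpr ⟨hba, Finset.mem_univ b⟩
  set g : Fin n → MvPolynomial (Fin n) ℝ := fun i => if i = b then X a + X b else X i with hgdef
  set φ : MvPolynomial (Fin n) ℝ →ₐ[ℝ] MvPolynomial (Fin n) ℝ := aeval g with hφdef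
  have hgdeg : ∀ i, (g i).totalDegree ≤ 1 := by
    intro i
    by_cases hi : i = b
    · simp only [hgdef, hi, if_pos rfl]
      exact (totalDegree_add _ _).trans (by simp)
    · simp [hgdef, hi]
  have hφdeg : ∀ p : MvPolynomial (Fin n) ℝ, (φ p).totalDegree ≤ p.totalDegree :=
    totalDegree_aeval_le_of_deg_le_one g hgdeg
  have hφsos : ∀ p : MvPolynomial (Fin n) ℝ, IsSOS p → IsSOS (φ p) := by
    rintro p ⟨k, f, rfl⟩
    exact ⟨k, fun j => φ (f j), by rw [map_sum]; exact Finset.sum_congr rfl fun j _ => (map_pow φ _ _)⟩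
  have hφX : ∀ i, φ (X i) = g i := fun i => aeval_X _ _
  have hφC : ∀ c : ℝ, φ (C c) = C c := fun c => by simp [hφdef]
  -- the key resummation lemma
  have key : ∀ c : Fin n → MvPolynomial (Fin n) ℝ, c b = c a →
      ∑ i ∈ univ.erase a, c i * g i = ∑ i, c i * X i := by
    intro c hc
    rw [← Finset.add_sum_erase _ (fun i => c i * g i) hbmem]
    have hrest : ∑ i ∈ (univ.erase a).erase b, c i * g i
        = ∑ i ∈ (univ.erase a).erase b, c i * X i := by
      refine Finset.sum_congr rfl fun i hi => ?_
      have hib : i ≠ b := (Finset.mem_erase.mp hi).1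
      simp [hgdef, hib]
    rw [hrest, ← Finset.add_sum_erase univ (fun i => c i * X i) (Finset.mem_univ a),
      ← Finset.add_sum_erase _ (fun i => c i * X i) hbmem]
    have hgb : g b = X a + X b := by simp [hgdef]
    rw [hgb, hc]
    ring
  -- the linear constraint transfers
  have hlin : φ ((∑ i ∈ univ.erase a, X i) - 1) = (∑ i, X i) - 1 := by
    rw [map_sub, _root_.map_one, map_sum]
    congr 1
    have : ∀ i ∈ univ.erase a, φ (X i) = (1 : MvPolynomial (Fin n) ℝ) * g i := by
      intro i _; rw [hφX]; ring
    rw [Finset.sum_congr rfl this, key (fun _ => 1) rfl]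
    simp
  -- matrix facts
  set M : Matrix (Fin n) (Fin n) ℝ := G.adjMatrix ℝ + 1 with hMdef
  have hMT : Mᵀ = M := by
    rw [hMdef, Matrix.transpose_add, SimpleGraph.transpose_adjMatrix, Matrix.transpose_one]
  have hMsymm : ∀ i j, M i j = M j i := by
    intro i j
    have h2 := congrFun (congrFun hMT.symm i) j
    rwa [Matrix.transpose_apply] at h2
  have htwinset : ∀ i, (G.Adj a i ∧ i ≠ b) ↔ (G.Adj b i ∧ i ≠ a) := by
    intro i
    have := Set.ext_iff.mp htwin i
    simpa [SimpleGraph.neighborSet] using this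
  have htwin' : ∀ i, M i b = M i a := by
    intro i
    by_cases hia : i = a
    · subst hia
      simp [hMdef, Matrix.add_apply, Matrix.one_apply, hadj, hab, G.irrefl]
    · by_cases hib : i = b
      · subst hib
        simp [hMdef, Matrix.add_apply, Matrix.one_apply, hadj.symm, hba, G.irrefl]
      · have hiff : G.Adj i b ↔ G.Adj i a := by
          rw [G.adj_comm i b, G.adj_comm i a]
          constructor
          · intro hh; exact ((htwinset i).mpr ⟨hh, hia⟩).1
          · intro hh; exact ((htwinset i).mp ⟨hh, hib⟩).1
        simp only [hMdef, Matrix.add_apply, Matrix.one_apply, SimpleGraph.adjMatrix_apply,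
          if_neg hia, if_neg hib]
        by_cases hh : G.Adj i b
        · rw [if_pos hh, if_pos (hiff.mp hh)]
        · rw [if_neg hh, if_neg (fun hc => hh (hiff.mpr hc))]
  have htwin'' : ∀ j, M b j = M a j := fun j => by
    rw [hMsymm b j, htwin' j, hMsymm j a]
  -- the quadratic form transfers
  have hquad : φ (∑ i ∈ univ.erase a, ∑ j ∈ univ.erase a, C (M i j) * X i * X j)
      = ∑ i, ∑ j, C (M i j) * X i * X j := by
    rw [map_sum]
    have inner : ∀ i, φ (∑ j ∈ univ.erase a, C (M i j) * X i * X j)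
        = (∑ j, C (M i j) * X j) * g i := by
      intro i
      rw [map_sum]
      have h1 : ∀ j ∈ univ.erase a, φ (C (M i j) * X i * X j)
          = (C (M i j) * g i) * g j := by
        intro j _
        rw [_root_.map_mul, _root_.map_mul, hφC, hφX, hφX]
      rw [Finset.sum_congr rfl h1, key (fun j => C (M i j) * g i) (by show C (M i b) * g i = C (M i a) * g i; rw [htwin' i])]
      rw [Finset.sum_mul]
      exact Finset.sum_congr rfl fun j _ => by ring
    rw [Finset.sum_congr rfl fun i _ => inner i,
      key (fun i => ∑ j, C (M i j) * X j)
        (by refine Finset.sum_congr rfl fun j _ => ?_; rw [htwin'' j])]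
    refine Finset.sum_congr rfl fun i _ => ?_
    rw [Finset.sum_mul]
    exact Finset.sum_congr rfl fun j _ => by ring
  -- the new certificate
  refine ⟨φ σ₀, fun i => φ (σ (if i = a then b else i)), φ q,
    hφsos _ hσ₀sos, (hφdeg _).trans hσ₀deg, ?_, ?_, ?_⟩
  · intro i
    show IsSOS (φ (σ (if i = a then b else i))) ∧
      (X i * φ (σ (if i = a then b else i))).totalDegree ≤ r
    set j : Fin n := if i = a then b else i with hjdef
    have hja : j ∈ univ.erase a := by
      by_cases hia : i = a
      · simp [hjdef, hia, hba]
      · simp [hjdef, hia]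
    obtain ⟨hjsos, hjdeg⟩ := hσ j hja
    refine ⟨hφsos _ hjsos, ?_⟩
    by_cases h0 : σ j = 0
    · simp [h0]
    · have h1 := le_totalDegree_X_mul j h0
      have h2 : (X i * φ (σ j)).totalDegree ≤ 1 + (φ (σ j)).totalDegree :=
        (totalDegree_mul _ _).trans (by simp [totalDegree_X])
      have h3 := hφdeg (σ j)
      omega
  · rw [← hlin, ← _root_.map_mul]
    exact (hφdeg _).trans hqdeg
  · show (∑ i, ∑ j, C (M i j) * X i * X j) - C (1 / (alpha G : ℝ)) =
      φ σ₀ + (∑ i, X i * φ (σ (if i = a then b else i))) + φ q * ((∑ i, X i) - 1)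
    have hmain := congrArg φ heq
    rw [map_sub, map_add, map_add, _root_.map_mul, hφC, hlin, hquad] at hmain
    rw [hmain]
    congr 1
    congr 1
    rw [map_sum]
    have h1 : ∀ i ∈ univ.erase a, φ (X i * σ i)
        = (φ (σ (if i = a then b else i))) * g i := by
      intro i hi
      have hia : i ≠ a := (Finset.mem_erase.mp hi).1
      rw [_root_.map_mul, hφX, if_neg hia]
      ring
    rw [Finset.sum_congr rfl h1,
      key (fun i => φ (σ (if i = a then b else i)))
        (by show φ (σ (if b = a then b else b)) = φ (σ (if a = a then b else a)); simp [hba])]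
    exact Finset.sum_congr rfl fun i _ => by ring
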